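/- Let σ and σ̂ be n×n complex positive semidefinite matrices of trace 1 (density matrices), and let r ≤ n be a positive integer. Suppose rank(σ) ≤ r and ‖σ − σ̂‖₁ ≤ η for some η > 0. Let σ̂ = Σᵢ λᵢ vᵢvᵢᴴ be a spectral decomposition of σ̂ with eigenvalues λ₁ ≥ λ₂ ≥ … ≥ λₙ ≥ 0 and orthonormal eigenvectors vᵢ, and let Π_W be the orthogonal projection onto W = span{v₁,…,v_r}. Then Tr[(I − Π_W)σ] ≤ 2η. -/

import Mathlib

open scoped ComplexOrder
/-- The trace norm of a complex matrix: the trace of the positive semidefinite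
square root of `Aᴴ * A`. -/
noncomputable def traceNorm {n : ℕ} (A : Matrix (Fin n) (Fin n) ℂ) : ℝ :=
  (((Matrix.posSemidef_conjTranspose_mul_self A).1.eigenvectorUnitary : Matrix (Fin n) (Fin n) ℂ) *
      Matrix.diagonal (((↑) : ℝ → ℂ) ∘ (√·) ∘ (Matrix.posSemidef_conjTranspose_mul_self A).1.eigenvalues) *
      (star (Matrix.posSemidef_conjTranspose_mul_self A).1.eigenvectorUnitary :
        Matrix (Fin n) (Fin n) ℂ)).trace.re

namespace StmtHelper
open Matrix
variable {n : ℕ}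

noncomputable def Q (w : Fin n → Fin n → ℂ) (s : Finset (Fin n)) : Matrix (Fin n) (Fin n) ℂ :=
  ∑ i ∈ s, vecMulVec (w i) (star (w i))

lemma trace_mul_vecMulVec (M : Matrix (Fin n) (Fin n) ℂ) (a b : Fin n → ℂ) :
    (M * vecMulVec a b).trace = b ⬝ᵥ (M *ᵥ a) := by
  simp only [Matrix.trace, Matrix.diag, Matrix.mul_apply, Matrix.vecMulVec_apply,
    dotProduct, Matrix.mulVec, dotProduct, Finset.mul_sum]
  exact Finset.sum_congr rfl fun k _ => Finset.sum_congr rfl fun m _ => by ring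

lemma sum_mulVec' {ι : Type*} (s : Finset ι) (A : ι → Matrix (Fin n) (Fin n) ℂ)
    (x : Fin n → ℂ) : (∑ i ∈ s, A i) *ᵥ x = ∑ i ∈ s, A i *ᵥ x := by
  ext k
  simp only [Matrix.mulVec, dotProduct, Finset.sum_apply, Matrix.sum_apply, Finset.sum_mul]
  exact Finset.sum_comm

lemma dotProduct_sum' {ι : Type*} (s : Finset ι) (x : Fin n → ℂ) (f : ι → Fin n → ℂ) :
    x ⬝ᵥ (∑ i ∈ s, f i) = ∑ i ∈ s, x ⬝ᵥ f i := by
  simp only [dotProduct, Finset.sum_apply, Finset.mul_sum]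
  exact Finset.sum_comm

lemma vecMulVec_mulVec' (a b x : Fin n → ℂ) :
    vecMulVec a b *ᵥ x = (b ⬝ᵥ x) • a := by
  ext k
  simp only [Matrix.mulVec, Matrix.vecMulVec_apply, dotProduct, Pi.smul_apply, smul_eq_mul,
    Finset.sum_mul]
  exact Finset.sum_congr rfl fun m _ => by ring

lemma star_dotProduct_comm (a x : Fin n → ℂ) :
    star x ⬝ᵥ a = star (star a ⬝ᵥ x) := by
  simp [dotProduct, star_sum, mul_comm]

lemma q_Q (w : Fin n → Fin n → ℂ) (s : Finset (Fin n)) (x : Fin n → ℂ) :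
    star x ⬝ᵥ (Q w s *ᵥ x) =
      ((∑ i ∈ s, Complex.normSq (star (w i) ⬝ᵥ x) : ℝ) : ℂ) := by
  rw [Q, sum_mulVec', dotProduct_sum']
  push_cast
  refine Finset.sum_congr rfl fun i _ => ?_
  rw [vecMulVec_mulVec', dotProduct_smul, star_dotProduct_comm, smul_eq_mul,
    Complex.star_def]
  rw [Complex.normSq_conj, mul_comm]
  exact Complex.mul_conj _

lemma Q_univ (w : Fin n → Fin n → ℂ)
    (hw : ∀ i j, star (w i) ⬝ᵥ w j = if i = j then 1 else 0) :
    Q w Finset.univ = 1 := by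
  set V : Matrix (Fin n) (Fin n) ℂ := Matrix.of fun k i => w i k with hV
  have h1 : Vᴴ * V = 1 := by
    ext i j
    simp only [Matrix.mul_apply, Matrix.conjTranspose_apply, hV, Matrix.of_apply,
      Matrix.one_apply]
    rw [← hw i j]
    simp [dotProduct]
  have h2 : V * Vᴴ = 1 := mul_eq_one_comm.mp h1
  rw [← h2]
  ext k l
  simp [Q, Matrix.sum_apply, Matrix.vecMulVec_apply, Matrix.mul_apply,
    Matrix.conjTranspose_apply, hV]

lemma Q_compl (w : Fin n → Fin n → ℂ)
    (hw : ∀ i j, star (w i) ⬝ᵥ w j = if i = j then 1 else 0) (s : Finset (Fin n)) :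
    Q w sᶜ = 1 - Q w s := by
  rw [← Q_univ w hw, eq_sub_iff_add_eq, Q, Q, Q, Finset.sum_compl_add_sum]

lemma sum_normSq_eq_one (w : Fin n → Fin n → ℂ)
    (hw : ∀ i j, star (w i) ⬝ᵥ w j = if i = j then 1 else 0)
    (x : Fin n → ℂ) (hx : star x ⬝ᵥ x = 1) :
    (∑ i, Complex.normSq (star (w i) ⬝ᵥ x)) = 1 := by
  have hfull : ((∑ i, Complex.normSq (star (w i) ⬝ᵥ x) : ℝ) : ℂ) = 1 := by
    rw [← q_Q w Finset.univ x, Q_univ w hw, Matrix.one_mulVec, hx]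
  exact_mod_cast hfull

lemma normSq_sum_le_one (w : Fin n → Fin n → ℂ)
    (hw : ∀ i j, star (w i) ⬝ᵥ w j = if i = j then 1 else 0)
    (s : Finset (Fin n)) (x : Fin n → ℂ) (hx : star x ⬝ᵥ x = 1) :
    (∑ i ∈ s, Complex.normSq (star (w i) ⬝ᵥ x)) ≤ 1 := by
  rw [← sum_normSq_eq_one w hw x hx]
  exact Finset.sum_le_sum_of_subset_of_nonneg (Finset.subset_univ s)
    (fun i _ _ => Complex.normSq_nonneg _)

lemma spectral_sum {A : Matrix (Fin n) (Fin n) ℂ} (hA : A.IsHermitian) :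
    A = ∑ j, (hA.eigenvalues j : ℂ) •
      vecMulVec (hA.eigenvectorBasis j) (star ⇑(hA.eigenvectorBasis j)) := by
  conv_lhs => rw [hA.spectral_theorem]
  ext k l
  simp [Matrix.mul_apply, Matrix.diagonal_apply, Matrix.sum_apply, Matrix.vecMulVec_apply,
    Matrix.conjTranspose_apply, Finset.sum_ite_eq, mul_comm, mul_assoc]

lemma eigbasis_orthonormal {A : Matrix (Fin n) (Fin n) ℂ} (hA : A.IsHermitian) (i j : Fin n) :
    star ⇑(hA.eigenvectorBasis i) ⬝ᵥ ⇑(hA.eigenvectorBasis j) = if i = j then 1 else 0 := by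
  have h := (orthonormal_iff_ite.mp hA.eigenvectorBasis.orthonormal) i j
  rw [EuclideanSpace.inner_eq_star_dotProduct, dotProduct_comm] at h
  exact h

lemma traceNorm_hermitian {A : Matrix (Fin n) (Fin n) ℂ} (hA : A.IsHermitian) :
    traceNorm A = ∑ j, |hA.eigenvalues j| := by
  set U : Matrix (Fin n) (Fin n) ℂ := (hA.eigenvectorUnitary : Matrix (Fin n) (Fin n) ℂ) with hU
  have hUU : Uᴴ * U = 1 := by
    rw [← Matrix.star_eq_conjTranspose]
    exact Matrix.mem_unitaryGroup_iff'.mp hA.eigenvectorUnitary.2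
  set D : Matrix (Fin n) (Fin n) ℂ :=
    Matrix.diagonal (fun j => ((|hA.eigenvalues j| : ℝ) : ℂ)) with hD
  set B : Matrix (Fin n) (Fin n) ℂ := U * D * Uᴴ with hB
  have hDpsd : D.PosSemidef := Matrix.posSemidef_diagonal_iff.mpr fun i => by
    rw [Complex.zero_le_real]; exact abs_nonneg _
  have hBpsd : B.PosSemidef := hDpsd.mul_mul_conjTranspose_same U
  have hsq : B ^ 2 = Aᴴ * A := by
    rw [hA.eq, pow_two, hB]
    conv_rhs => rw [hA.spectral_theorem, Unitary.conjStarAlgAut_apply]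
    rw [← hU]
    simp only [Matrix.star_eq_conjTranspose]
    have hassoc : ∀ (D₁ D₂ : Matrix (Fin n) (Fin n) ℂ),
        U * D₁ * Uᴴ * (U * D₂ * Uᴴ) = U * (D₁ * D₂) * Uᴴ := by
      intro D₁ D₂
      calc U * D₁ * Uᴴ * (U * D₂ * Uᴴ) = U * D₁ * (Uᴴ * U) * D₂ * Uᴴ := by
            simp only [Matrix.mul_assoc]
        _ = U * (D₁ * D₂) * Uᴴ := by rw [hUU]; simp only [Matrix.mul_one, Matrix.mul_assoc]
    rw [hassoc, hassoc, hD, Matrix.diagonal_mul_diagonal, Matrix.diagonal_mul_diagonal]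
    congr 1
    congr 1
    apply congrArg Matrix.diagonal
    funext j
    show ((|hA.eigenvalues j| : ℝ) : ℂ) * ((|hA.eigenvalues j| : ℝ) : ℂ)
      = ((hA.eigenvalues j : ℝ) : ℂ) * ((hA.eigenvalues j : ℝ) : ℂ)
    rw [← Complex.ofReal_mul, ← Complex.ofReal_mul, ← abs_mul, abs_mul_self]
  have hBs : B = (((Matrix.posSemidef_conjTranspose_mul_self A).1.eigenvectorUnitary : Matrix (Fin n) (Fin n) ℂ) *
      Matrix.diagonal (((↑) : ℝ → ℂ) ∘ (√·) ∘ (Matrix.posSemidef_conjTranspose_mul_self A).1.eigenvalues) *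
      (star (Matrix.posSemidef_conjTranspose_mul_self A).1.eigenvectorUnitary :
        Matrix (Fin n) (Fin n) ℂ)) := by
    open scoped MatrixOrder in
    have e1 : (((Matrix.posSemidef_conjTranspose_mul_self A).1.eigenvectorUnitary : Matrix (Fin n) (Fin n) ℂ) *
        Matrix.diagonal (((↑) : ℝ → ℂ) ∘ (√·) ∘ (Matrix.posSemidef_conjTranspose_mul_self A).1.eigenvalues) *
        (star (Matrix.posSemidef_conjTranspose_mul_self A).1.eigenvectorUnitary :
          Matrix (Fin n) (Fin n) ℂ)) = CFC.sqrt (Aᴴ * A) := by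
      rw [CFC.sqrt_eq_real_sqrt _ (Matrix.posSemidef_conjTranspose_mul_self A).nonneg,
        cfcₙ_eq_cfc, (Matrix.posSemidef_conjTranspose_mul_self A).1.cfc_eq]
      rfl
    open scoped MatrixOrder in
    rw [e1, CFC.sqrt_unique ((pow_two B).symm.trans hsq) hBpsd.nonneg]
  rw [traceNorm, ← hBs, hB, Matrix.trace_mul_comm, ← Matrix.mul_assoc, hUU, Matrix.one_mul]
  simp [hD, Matrix.trace_diagonal]

/-- Packaged spectral data. -/
lemma exists_spectral {A : Matrix (Fin n) (Fin n) ℂ} (hA : A.IsHermitian) :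
    ∃ (μ : Fin n → ℝ) (u : Fin n → Fin n → ℂ),
      (∀ i j, star (u i) ⬝ᵥ u j = if i = j then 1 else 0) ∧
      A = ∑ j, (μ j : ℂ) • vecMulVec (u j) (star (u j)) ∧
      traceNorm A = ∑ j, |μ j| ∧
      A.rank = (Finset.univ.filter fun j => μ j ≠ 0).card ∧
      (A.PosSemidef → ∀ i, 0 ≤ μ i) :=
  ⟨hA.eigenvalues, fun j => ⇑(hA.eigenvectorBasis j), eigbasis_orthonormal hA,
    spectral_sum hA, traceNorm_hermitian hA,
    by rw [hA.rank_eq_card_non_zero_eigs, Fintype.card_subtype],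
    fun hP i => hP.eigenvalues_nonneg i⟩

/-- Trace of Q * A as a weighted sum, for A given by a spectral-type decomposition. -/
lemma trace_Q_mul_eq (w : Fin n → Fin n → ℂ) (s : Finset (Fin n))
    {A : Matrix (Fin n) (Fin n) ℂ} (μ : Fin n → ℝ) (u : Fin n → Fin n → ℂ)
    (hAdec : A = ∑ j, (μ j : ℂ) • vecMulVec (u j) (star (u j))) :
    ((Q w s) * A).trace.re = ∑ j, μ j *
      (∑ i ∈ s, Complex.normSq (star (w i) ⬝ᵥ u j)) := by
  conv_lhs => rw [hAdec]
  rw [Finset.mul_sum, Matrix.trace_sum, Complex.re_sum]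
  refine Finset.sum_congr rfl fun j _ => ?_
  rw [Matrix.mul_smul, Matrix.trace_smul, trace_mul_vecMulVec, q_Q]
  rw [smul_eq_mul, ← Complex.ofReal_mul]
  exact Complex.ofReal_re _

lemma abs_trace_Q_mul_le (w : Fin n → Fin n → ℂ)
    (hw : ∀ i j, star (w i) ⬝ᵥ w j = if i = j then 1 else 0)
    (s : Finset (Fin n)) {A : Matrix (Fin n) (Fin n) ℂ}
    (μ : Fin n → ℝ) (u : Fin n → Fin n → ℂ)
    (hu : ∀ i j, star (u i) ⬝ᵥ u j = if i = j then 1 else 0)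
    (hAdec : A = ∑ j, (μ j : ℂ) • vecMulVec (u j) (star (u j)))
    (htn : traceNorm A = ∑ j, |μ j|) :
    |((Q w s) * A).trace.re| ≤ traceNorm A := by
  rw [trace_Q_mul_eq w s μ u hAdec, htn]
  refine (Finset.abs_sum_le_sum_abs _ _).trans ?_
  refine Finset.sum_le_sum fun j _ => ?_
  have hx : star (u j) ⬝ᵥ u j = 1 := by simpa using hu j j
  have h0 : 0 ≤ ∑ i ∈ s, Complex.normSq (star (w i) ⬝ᵥ u j) :=
    Finset.sum_nonneg fun i _ => Complex.normSq_nonneg _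
  have h1 := normSq_sum_le_one w hw s _ hx
  rw [abs_mul, abs_of_nonneg h0]
  calc |μ j| * _ ≤ |μ j| * 1 := mul_le_mul_of_nonneg_left h1 (abs_nonneg _)
    _ = |μ j| := mul_one _

lemma vecMulVec_mul_vecMulVec (a b c d : Fin n → ℂ) :
    vecMulVec a b * vecMulVec c d = (b ⬝ᵥ c) • vecMulVec a d := by
  ext k l
  simp only [Matrix.mul_apply, Matrix.vecMulVec_apply, Matrix.smul_apply, smul_eq_mul,
    dotProduct, Finset.sum_mul, Finset.mul_sum]
  exact Finset.sum_congr rfl fun m _ => by ring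

/-- The projection onto the nonzero-eigenvalue eigenspaces absorbs A. -/
lemma Q_mul_self {A : Matrix (Fin n) (Fin n) ℂ} (μ : Fin n → ℝ) (u : Fin n → Fin n → ℂ)
    (hu : ∀ i j, star (u i) ⬝ᵥ u j = if i = j then 1 else 0)
    (hAdec : A = ∑ j, (μ j : ℂ) • vecMulVec (u j) (star (u j))) :
    Q u (Finset.univ.filter fun j => μ j ≠ 0) * A = A := by
  set S := Finset.univ.filter fun j => μ j ≠ 0 with hS
  conv_lhs => rw [hAdec]
  conv_rhs => rw [hAdec]
  rw [Finset.mul_sum]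
  refine Finset.sum_congr rfl fun j _ => ?_
  rw [Matrix.mul_smul]
  by_cases hj : μ j = 0
  · simp [hj]
  · congr 1
    rw [Q, Finset.sum_mul]
    have hterm : ∀ i ∈ S, vecMulVec (u i) (star (u i)) * vecMulVec (u j) (star (u j))
        = if i = j then vecMulVec (u j) (star (u j)) else 0 := by
      intro i _
      rw [vecMulVec_mul_vecMulVec, hu i j]
      split_ifs with h
      · subst h; simp
      · simp
    rw [Finset.sum_congr rfl hterm, Finset.sum_ite_eq' S j]
    simp [hS, hj]


lemma card_filter_lt {r : ℕ} (hrn : r ≤ n) :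
    (Finset.univ.filter fun j : Fin n => (j:ℕ) < r).card = r := by
  rw [Finset.card_filter]
  rw [Fin.sum_univ_eq_sum_range (fun k => if k < r then 1 else 0)]
  rw [← Finset.card_filter]
  have h : (Finset.range n).filter (fun k => k < r) = Finset.range r := by
    ext k
    simp only [Finset.mem_filter, Finset.mem_range]
    omega
  simp [h]

lemma kyfan {r : ℕ} (hrn : r ≤ n) (lam m : Fin n → ℝ)
    (hdec : ∀ i j : Fin n, i ≤ j → lam j ≤ lam i)
    (hnonneg : ∀ i, 0 ≤ lam i)
    (hm0 : ∀ j, 0 ≤ m j) (hm1 : ∀ j, m j ≤ 1)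
    (hmsum : (((Finset.univ.filter fun j : Fin n => (j:ℕ) < r)ᶜ.card : ℕ) : ℝ) ≤ ∑ j, m j) :
    ∑ j ∈ (Finset.univ.filter fun j : Fin n => (j:ℕ) < r)ᶜ, lam j ≤ ∑ j, lam j * m j := by
  set s := Finset.univ.filter fun j : Fin n => (j:ℕ) < r with hs
  have hsplit : ∑ j ∈ s, lam j * m j + ∑ j ∈ sᶜ, lam j * m j = ∑ j, lam j * m j :=
    Finset.sum_add_sum_compl s _
  have hmem_s : ∀ j : Fin n, j ∈ s ↔ (j:ℕ) < r := by
    intro j; simp [hs]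
  by_cases hcase : r < n
  · set c := lam ⟨r, hcase⟩ with hc
    have hts : ∀ j ∈ sᶜ, lam j ≤ c := by
      intro j hj
      rw [Finset.mem_compl, hmem_s] at hj
      exact hdec _ _ (by simpa [Fin.le_def] using le_of_not_gt hj)
    have hss : ∀ j ∈ s, c ≤ lam j := by
      intro j hj
      rw [hmem_s] at hj
      exact hdec _ _ (by simpa [Fin.le_def] using le_of_lt hj)
    have h1 : ∑ j ∈ sᶜ, lam j * (1 - m j) ≤ c * ∑ j ∈ sᶜ, (1 - m j) := by
      rw [Finset.mul_sum]
      refine Finset.sum_le_sum fun j hj => ?_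
      exact mul_le_mul_of_nonneg_right (hts j hj) (by linarith [hm1 j])
    have h2 : ∑ j ∈ sᶜ, (1 - m j) ≤ ∑ j ∈ s, m j := by
      have e1 : ∑ j ∈ sᶜ, (1 - m j) = (sᶜ.card : ℝ) - ∑ j ∈ sᶜ, m j := by
        rw [Finset.sum_sub_distrib]
        simp
      have e2 : ∑ j, m j = ∑ j ∈ s, m j + ∑ j ∈ sᶜ, m j :=
        (Finset.sum_add_sum_compl s m).symm
      rw [e1]
      rw [e2] at hmsum
      linarith
    have h3 : c * ∑ j ∈ s, m j ≤ ∑ j ∈ s, lam j * m j := by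
      rw [Finset.mul_sum]
      refine Finset.sum_le_sum fun j hj => ?_
      exact mul_le_mul_of_nonneg_right (hss j hj) (hm0 j)
    have hcn : 0 ≤ c := hnonneg _
    have key : ∑ j ∈ sᶜ, lam j * (1 - m j) ≤ ∑ j ∈ s, lam j * m j :=
      h1.trans ((mul_le_mul_of_nonneg_left h2 hcn).trans h3)
    have expand : ∑ j ∈ sᶜ, lam j = ∑ j ∈ sᶜ, lam j * m j + ∑ j ∈ sᶜ, lam j * (1 - m j) := by
      rw [← Finset.sum_add_distrib]
      exact Finset.sum_congr rfl fun j _ => by ring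
    linarith
  · have hts : sᶜ = ∅ := by
      ext j
      simp only [Finset.mem_compl, hmem_s, Finset.notMem_empty, iff_false, not_not]
      exact lt_of_lt_of_le j.isLt (le_of_not_gt hcase)
    rw [hts]
    simp only [Finset.sum_empty]
    exact Finset.sum_nonneg fun j _ => mul_nonneg (hnonneg j) (hm0 j)


end StmtHelper

open Matrix StmtHelper in
theorem stmt0 {n r : ℕ} (hr : 0 < r) (hrn : r ≤ n)
    (σ σhat : Matrix (Fin n) (Fin n) ℂ)
    (hσ : σ.PosSemidef) (hσtr : σ.trace = 1)
    (hσhat : σhat.PosSemidef) (hσhattr : σhat.trace = 1)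
    (hrank : σ.rank ≤ r)
    (η : ℝ) (hη : 0 < η) (hdist : traceNorm (σ - σhat) ≤ η)
    (lam : Fin n → ℝ) (v : Fin n → Fin n → ℂ)
    (horth : ∀ i j, dotProduct (star (v i)) (v j) = if i = j then 1 else 0)
    (hdec : ∀ i j : Fin n, i ≤ j → lam j ≤ lam i)
    (hnonneg : ∀ i, 0 ≤ lam i)
    (hspec : σhat = ∑ i, (lam i : ℂ) • Matrix.vecMulVec (v i) (star (v i))) :
    (((1 : Matrix (Fin n) (Fin n) ℂ)
        - ∑ i ∈ Finset.univ.filter (fun i : Fin n => (i : ℕ) < r),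
            Matrix.vecMulVec (v i) (star (v i))) * σ).trace.re ≤ 2 * η := by
  classical
  -- spectral data for A := σ - σhat
  obtain ⟨μ, u, hu, hAdec, htn, -, -⟩ := exists_spectral (hσ.1.sub hσhat.1)
  -- spectral data for σ
  obtain ⟨ν, uσ, huσ, hσdec, -, hσrank, hνnn'⟩ := exists_spectral hσ.1
  set sr := Finset.univ.filter (fun i : Fin n => (i : ℕ) < r) with hsr
  -- rewrite the goal projector
  have hgoal : ((1 : Matrix (Fin n) (Fin n) ℂ)
        - ∑ i ∈ sr, Matrix.vecMulVec (v i) (star (v i))) = Q v srᶜ := by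
    rw [Q_compl v horth sr]; rfl
  rw [hgoal]
  -- split the trace
  have hsplitm : Q v srᶜ * σ = Q v srᶜ * (σ - σhat) + Q v srᶜ * σhat := by
    rw [← Matrix.mul_add, sub_add_cancel]
  have hsplit : (Q v srᶜ * σ).trace.re
      = (Q v srᶜ * (σ - σhat)).trace.re + (Q v srᶜ * σhat).trace.re := by
    rw [hsplitm, Matrix.trace_add, Complex.add_re]
  -- first term is at most η
  have hterm1 : (Q v srᶜ * (σ - σhat)).trace.re ≤ η :=
    (le_abs_self _).trans ((abs_trace_Q_mul_le v horth srᶜ μ u hu hAdec htn).trans hdist)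
  -- second term equals the tail sum of eigenvalues of σhat
  have hterm2 : (Q v srᶜ * σhat).trace.re = ∑ j ∈ srᶜ, lam j := by
    rw [trace_Q_mul_eq v srᶜ lam v hspec]
    have hinner : ∀ j : Fin n, (∑ i ∈ srᶜ, Complex.normSq (star (v i) ⬝ᵥ v j))
        = if j ∈ srᶜ then 1 else 0 := by
      intro j
      have hterm : ∀ i ∈ srᶜ, Complex.normSq (star (v i) ⬝ᵥ v j)
          = if i = j then 1 else 0 := by
        intro i _
        rw [horth i j]
        split_ifs <;> simp
      rw [Finset.sum_congr rfl hterm, Finset.sum_ite_eq' srᶜ j]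
    have : ∀ j : Fin n, lam j * (∑ i ∈ srᶜ, Complex.normSq (star (v i) ⬝ᵥ v j))
        = if j ∈ srᶜ then lam j else 0 := by
      intro j
      rw [hinner j]
      split_ifs <;> simp
    rw [Finset.sum_congr rfl fun j _ => this j, Finset.sum_ite_mem,
      Finset.univ_inter]
  -- the tail sum is at most η (Ky Fan)
  set S := Finset.univ.filter fun j => ν j ≠ 0 with hS
  have hcardS : S.card ≤ r := by rw [← hσrank]; exact hrank
  have hPσ : Q uσ S * σ = σ := Q_mul_self ν uσ huσ hσdec
  have hQzero : Q uσ Sᶜ * σ = 0 := by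
    rw [Q_compl uσ huσ S, Matrix.sub_mul, Matrix.one_mul, hPσ, sub_self]
  set m : Fin n → ℝ := fun j => ∑ i ∈ Sᶜ, Complex.normSq (star (uσ i) ⬝ᵥ v j) with hm
  have hvunit : ∀ j, star (v j) ⬝ᵥ v j = 1 := fun j => by simpa using horth j j
  have huunit : ∀ i, star (uσ i) ⬝ᵥ uσ i = 1 := fun i => by simpa using huσ i i
  have hm0 : ∀ j, 0 ≤ m j := fun j => Finset.sum_nonneg fun i _ => Complex.normSq_nonneg _
  have hm1 : ∀ j, m j ≤ 1 := fun j => normSq_sum_le_one uσ huσ Sᶜ (v j) (hvunit j)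
  have hmsum : ∑ j, m j = (Sᶜ.card : ℝ) := by
    rw [hm, Finset.sum_comm]
    have hin : ∀ i : Fin n, ∑ j, Complex.normSq (star (uσ i) ⬝ᵥ v j) = 1 := by
      intro i
      have hsw : ∀ j, Complex.normSq (star (uσ i) ⬝ᵥ v j)
          = Complex.normSq (star (v j) ⬝ᵥ uσ i) := by
        intro j
        rw [star_dotProduct_comm (v j) (uσ i)]
        simp [Complex.star_def, Complex.normSq_conj]
      simp_rw [hsw]
      exact sum_normSq_eq_one v horth (uσ i) (huunit i)
    simp [hin]
  have hcard_sr : (srᶜ.card : ℝ) ≤ ∑ j, m j := by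
    rw [hmsum]
    have h1 : srᶜ.card = n - r := by
      rw [Finset.card_compl, Fintype.card_fin, hsr, card_filter_lt hrn]
    have h2 : Sᶜ.card = n - S.card := by
      rw [Finset.card_compl, Fintype.card_fin]
    rw [h1, h2]
    exact_mod_cast Nat.sub_le_sub_left hcardS n
  have hky : ∑ j ∈ srᶜ, lam j ≤ ∑ j, lam j * m j :=
    kyfan hrn lam m hdec hnonneg hm0 hm1 hcard_sr
  have htailval : ∑ j, lam j * m j = (Q uσ Sᶜ * σhat).trace.re :=
    (trace_Q_mul_eq uσ Sᶜ lam v hspec).symm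
  have hshift : Q uσ Sᶜ * σhat = -(Q uσ Sᶜ * (σ - σhat)) := by
    rw [← Matrix.mul_neg, neg_sub, Matrix.mul_sub, hQzero, sub_zero]
  have htail2 : (Q uσ Sᶜ * σhat).trace.re ≤ η := by
    rw [hshift, Matrix.trace_neg, Complex.neg_re]
    have := abs_trace_Q_mul_le uσ huσ Sᶜ μ u hu hAdec htn
    have := neg_le_abs ((Q uσ Sᶜ * (σ - σhat)).trace.re)
    linarith [hdist, abs_trace_Q_mul_le uσ huσ Sᶜ μ u hu hAdec htn,
      neg_le_abs ((Q uσ Sᶜ * (σ - σhat)).trace.re)]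
  have htail : ∑ j ∈ srᶜ, lam j ≤ η := hky.trans (htailval ▸ htail2)
  rw [hsplit, hterm2]
  linarith
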